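/- Assume the stability condition P > xQ, fix s_Σ ∈ ℝ and β₀ ∈ (0,1], and set β_∞ = (2 − β₀(1+x))/(1−x), ŝ = 2x·s_Σ + 2, r̂ = N and α = N·(s_Σ·x² − 3β₀(x+1) + x + 3)/(2k₂²·x·(1 + (k₁ − k₂)²)). Then there exist unique reals d₀, d₁ such that the function ψ defined with these constants satisfies ψ(t₋) = ψ(t₊) = 0; moreover, these unique d₀, d₁ automatically also satisfy ψ'(t₊) = −2β₀·t₊ and ψ'(t₋) = 2β_∞·t₋. -/

import Mathlib

set_option maxHeartbeats 3200000 in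
/-- Conical version of the boundary value problem: with the conical coupling
constant `α`, there exist unique `d₀, d₁` with `ψ(t₋) = ψ(t₊) = 0`, and these
automatically satisfy `ψ'(t₊) = −2β₀t₊` and `ψ'(t₋) = 2β_∞t₋`. -/
theorem conical_momentum_profile_bvp
    (x k1 k2 θ N P Q C tm tp : ℝ)
    (hx : x ∈ Set.Ioo (0 : ℝ) 1) (hk1 : k1 < 0) (hk2 : k2 ≠ 0)
    (hθ : θ ∈ Set.Ioo 0 Real.pi)
    (hN : N = Real.sqrt ((1 - k1 ^ 2 + k2 ^ 2) ^ 2 + 4 * k1 ^ 2))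
    (hcos : Real.cos θ = (1 - k1 ^ 2 + k2 ^ 2) / N)
    (hsin : Real.sin θ = -(2 * k1) / N)
    (hP : P = 1 + (k1 + k2) ^ 2) (hQ : Q = 1 + (k1 - k2) ^ 2)
    (hC : C = 4 * k1 * k2 * (P - x ^ 2 * Q) / (x ^ 2 * N ^ 2))
    (htm : tm = (1 - x) / x) (htp : tp = (1 + x) / x)
    (hstab : P > x * Q)
    (sS beta0 betaInf shat rhat alpha : ℝ)
    (hbeta0 : beta0 ∈ Set.Ioc (0 : ℝ) 1)
    (hbetaInf : betaInf = (2 - beta0 * (1 + x)) / (1 - x))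
    (hshat : shat = 2 * x * sS + 2) (hrhat : rhat = N)
    (halpha : alpha = N * (sS * x ^ 2 - 3 * beta0 * (x + 1) + x + 3)
      / (2 * k2 ^ 2 * x * (1 + (k1 - k2) ^ 2)))
    (ψ : ℝ → ℝ → ℝ → ℝ)
    (hψ : ψ = fun d0 d1 t => sS * t ^ 2
      + (alpha * Real.cos θ / (3 * Real.sin θ ^ 2) - (shat - alpha * rhat) / 6) * t ^ 3
      - (alpha / 3) * Real.sin θ * ((Real.cot θ ^ 2 + 1) * (t ^ 2 + C)) ^ ((3 : ℝ) / 2)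
      + d0 + d1 * t) :
    (∃! p : ℝ × ℝ, ψ p.1 p.2 tm = 0 ∧ ψ p.1 p.2 tp = 0) ∧
    (∀ d0 d1 : ℝ, ψ d0 d1 tm = 0 → ψ d0 d1 tp = 0 →
      deriv (ψ d0 d1) tp = -(2 * beta0 * tp) ∧ deriv (ψ d0 d1) tm = 2 * betaInf * tm) := by
  obtain ⟨hx0, hx1⟩ := hx
  have hx0' : x ≠ 0 := ne_of_gt hx0
  have hx1' : (1 : ℝ) - x ≠ 0 := by intro h; nlinarith
  have hk1' : k1 ≠ 0 := ne_of_lt hk1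
  have hNpos : 0 < N := by
    rw [hN]; apply Real.sqrt_pos.mpr; positivity
  have hNne : N ≠ 0 := ne_of_gt hNpos
  have hQne : (1 + (k1 - k2) ^ 2) ≠ 0 := by positivity
  have hPne : (1 + (k1 + k2) ^ 2) ≠ 0 := by positivity
  have hNsq' : N ^ 2 = (1 - k1 ^ 2 + k2 ^ 2) ^ 2 + 4 * k1 ^ 2 := by
    rw [hN]; exact Real.sq_sqrt (by positivity)
  have hN2 : N ^ 2 = (1 + (k1 + k2) ^ 2) * (1 + (k1 - k2) ^ 2) := by rw [hNsq']; ring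
  have hstab' : 0 < ((1 + (k1 + k2) ^ 2) - x * (1 + (k1 - k2) ^ 2)) := by
    rw [hP, hQ] at hstab; linarith
  have hden : (0 : ℝ) < -(2 * k1) * x := by
    apply mul_pos (by linarith) hx0
  have hwm0 : (0 : ℝ) ≤ (((1 + (k1 + k2) ^ 2) - x * (1 + (k1 - k2) ^ 2)) / (-(2 * k1) * x)) := le_of_lt (div_pos hstab' hden)
  have hup : (0 : ℝ) < ((1 + (k1 + k2) ^ 2) + x * (1 + (k1 - k2) ^ 2)) := by nlinarith [sq_nonneg (k1 + k2), sq_nonneg (k1 - k2)]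
  have hwp0 : (0 : ℝ) ≤ (((1 + (k1 + k2) ^ 2) + x * (1 + (k1 - k2) ^ 2)) / (-(2 * k1) * x)) := le_of_lt (div_pos hup hden)
  -- trig and alpha closed forms
  have h1 : alpha * Real.cos θ = (sS * x ^ 2 - 3 * beta0 * (x + 1) + x + 3) * (1 - k1 ^ 2 + k2 ^ 2) / (2 * k2 ^ 2 * x * (1 + (k1 - k2) ^ 2)) := by
    rw [halpha, hcos]; field_simp
  have hs2 : Real.sin θ ^ 2 = 4 * k1 ^ 2 / ((1 + (k1 + k2) ^ 2) * (1 + (k1 - k2) ^ 2)) := by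
    have h : Real.sin θ ^ 2 = 4 * k1 ^ 2 / N ^ 2 := by rw [hsin]; ring
    rw [h, hN2]
  have hr1 : alpha * rhat = (1 + (k1 + k2) ^ 2) * (1 + (k1 - k2) ^ 2) * (sS * x ^ 2 - 3 * beta0 * (x + 1) + x + 3) / (2 * k2 ^ 2 * x * (1 + (k1 - k2) ^ 2)) := by
    have h : alpha * rhat = N ^ 2 * (sS * x ^ 2 - 3 * beta0 * (x + 1) + x + 3) / (2 * k2 ^ 2 * x * (1 + (k1 - k2) ^ 2)) := by
      rw [halpha, hrhat]; ring
    rw [h, hN2]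
  have hsin3 : alpha / 3 * Real.sin θ = -(k1 * (sS * x ^ 2 - 3 * beta0 * (x + 1) + x + 3)) / (3 * k2 ^ 2 * x * (1 + (k1 - k2) ^ 2)) := by
    rw [halpha, hsin]; field_simp
  have hK : Real.cot θ ^ 2 + 1 = (1 + (k1 + k2) ^ 2) * (1 + (k1 - k2) ^ 2) / (4 * k1 ^ 2) := by
    rw [Real.cot_eq_cos_div_sin, hcos, hsin, ← hN2, hNsq']
    field_simp
    ring
  have hgm : (Real.cot θ ^ 2 + 1) * (tm ^ 2 + C) = (((1 + (k1 + k2) ^ 2) - x * (1 + (k1 - k2) ^ 2)) / (-(2 * k1) * x)) ^ 2 := by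
    rw [hK, htm, hC, hN2, hP, hQ]
    field_simp
    ring
  have hgp : (Real.cot θ ^ 2 + 1) * (tp ^ 2 + C) = (((1 + (k1 + k2) ^ 2) + x * (1 + (k1 - k2) ^ 2)) / (-(2 * k1) * x)) ^ 2 := by
    rw [hK, htp, hC, hN2, hP, hQ]
    field_simp
    ring
  have hcube : ∀ w : ℝ, 0 ≤ w → (w ^ 2) ^ ((3 : ℝ) / 2) = w ^ 3 := by
    intro w hw
    rw [← Real.rpow_natCast w 2, ← Real.rpow_mul hw]
    norm_num
  have hhalf : ∀ w : ℝ, 0 ≤ w → (w ^ 2) ^ ((3 : ℝ) / 2 - 1) = w := by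
    intro w hw
    rw [← Real.rpow_natCast w 2, ← Real.rpow_mul hw]
    norm_num
  -- compact closed forms
  have hAc : alpha * Real.cos θ / (3 * Real.sin θ ^ 2) - (shat - alpha * rhat) / 6
      = (((1 + (k1 + k2) ^ 2) * (sS * x ^ 2 - 3 * beta0 * (x + 1) + x + 3) * (1 + k1 ^ 2 + k2 ^ 2) - 4 * k1 ^ 2 * k2 ^ 2 * x * (2 * x * sS + 2)) / (24 * k1 ^ 2 * k2 ^ 2 * x)) := by
    rw [h1, hs2, hr1, hshat]
    field_simp
    ring
  have hTm : alpha / 3 * Real.sin θ * (((1 + (k1 + k2) ^ 2) - x * (1 + (k1 - k2) ^ 2)) / (-(2 * k1) * x)) ^ 3 = ((sS * x ^ 2 - 3 * beta0 * (x + 1) + x + 3) * ((1 + (k1 + k2) ^ 2) - x * (1 + (k1 - k2) ^ 2)) ^ 3 / (24 * k1 ^ 2 * k2 ^ 2 * (1 + (k1 - k2) ^ 2) * x ^ 4)) := by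
    rw [hsin3]
    field_simp
    ring
  have hTp : alpha / 3 * Real.sin θ * (((1 + (k1 + k2) ^ 2) + x * (1 + (k1 - k2) ^ 2)) / (-(2 * k1) * x)) ^ 3 = ((sS * x ^ 2 - 3 * beta0 * (x + 1) + x + 3) * ((1 + (k1 + k2) ^ 2) + x * (1 + (k1 - k2) ^ 2)) ^ 3 / (24 * k1 ^ 2 * k2 ^ 2 * (1 + (k1 - k2) ^ 2) * x ^ 4)) := by
    rw [hsin3]
    field_simp
    ring
  have hSp : alpha / 3 * Real.sin θ * ((3 : ℝ) / 2 * (((1 + (k1 + k2) ^ 2) + x * (1 + (k1 - k2) ^ 2)) / (-(2 * k1) * x)) * ((Real.cot θ ^ 2 + 1) * (2 * tp)))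
      = ((sS * x ^ 2 - 3 * beta0 * (x + 1) + x + 3) * ((1 + (k1 + k2) ^ 2) + x * (1 + (k1 - k2) ^ 2)) * (1 + (k1 + k2) ^ 2) * ((1 + x) / x) / (8 * k1 ^ 2 * k2 ^ 2 * x ^ 2)) := by
    rw [hsin3, hK, htp]
    field_simp
    ring
  have hSm : alpha / 3 * Real.sin θ * ((3 : ℝ) / 2 * (((1 + (k1 + k2) ^ 2) - x * (1 + (k1 - k2) ^ 2)) / (-(2 * k1) * x)) * ((Real.cot θ ^ 2 + 1) * (2 * tm)))
      = ((sS * x ^ 2 - 3 * beta0 * (x + 1) + x + 3) * ((1 + (k1 + k2) ^ 2) - x * (1 + (k1 - k2) ^ 2)) * (1 + (k1 + k2) ^ 2) * ((1 - x) / x) / (8 * k1 ^ 2 * k2 ^ 2 * x ^ 2)) := by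
    rw [hsin3, hK, htm]
    field_simp
    ring
  -- value lemma
  obtain ⟨vm, hvm⟩ : ∃ v : ℝ, v = (sS * ((1 - x) / x) ^ 2 + (((1 + (k1 + k2) ^ 2) * (sS * x ^ 2 - 3 * beta0 * (x + 1) + x + 3) * (1 + k1 ^ 2 + k2 ^ 2) - 4 * k1 ^ 2 * k2 ^ 2 * x * (2 * x * sS + 2)) / (24 * k1 ^ 2 * k2 ^ 2 * x)) * ((1 - x) / x) ^ 3 - ((sS * x ^ 2 - 3 * beta0 * (x + 1) + x + 3) * ((1 + (k1 + k2) ^ 2) - x * (1 + (k1 - k2) ^ 2)) ^ 3 / (24 * k1 ^ 2 * k2 ^ 2 * (1 + (k1 - k2) ^ 2) * x ^ 4))) := ⟨_, rfl⟩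
  obtain ⟨vp, hvp⟩ : ∃ v : ℝ, v = (sS * ((1 + x) / x) ^ 2 + (((1 + (k1 + k2) ^ 2) * (sS * x ^ 2 - 3 * beta0 * (x + 1) + x + 3) * (1 + k1 ^ 2 + k2 ^ 2) - 4 * k1 ^ 2 * k2 ^ 2 * x * (2 * x * sS + 2)) / (24 * k1 ^ 2 * k2 ^ 2 * x)) * ((1 + x) / x) ^ 3 - ((sS * x ^ 2 - 3 * beta0 * (x + 1) + x + 3) * ((1 + (k1 + k2) ^ 2) + x * (1 + (k1 - k2) ^ 2)) ^ 3 / (24 * k1 ^ 2 * k2 ^ 2 * (1 + (k1 - k2) ^ 2) * x ^ 4))) := ⟨_, rfl⟩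
  have hval : ∀ d0 d1 : ℝ,
      ψ d0 d1 tm = vm + d0 + d1 * ((1 - x) / x) ∧
      ψ d0 d1 tp = vp + d0 + d1 * ((1 + x) / x) := by
    intro d0 d1
    constructor
    · simp only [hψ]
      rw [hgm, hcube _ hwm0, hAc, hTm, htm, hvm]
    · simp only [hψ]
      rw [hgp, hcube _ hwp0, hAc, hTp, htp, hvp]
  -- derivative lemma
  have hder : ∀ d0 d1 t : ℝ, HasDerivAt (ψ d0 d1)
      (2 * sS * t
        + 3 * (alpha * Real.cos θ / (3 * Real.sin θ ^ 2) - (shat - alpha * rhat) / 6) * t ^ 2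
        - alpha / 3 * Real.sin θ * ((3 : ℝ) / 2
            * ((Real.cot θ ^ 2 + 1) * (t ^ 2 + C)) ^ ((3 : ℝ) / 2 - 1)
            * ((Real.cot θ ^ 2 + 1) * (2 * t)))
        + d1) t := by
    intro d0 d1 t
    rw [hψ]
    have ht2 : HasDerivAt (fun t : ℝ => t ^ 2) (2 * t) t := by
      simpa using hasDerivAt_pow 2 t
    have ht3 : HasDerivAt (fun t : ℝ => t ^ 3) (3 * t ^ 2) t := by
      simpa using hasDerivAt_pow 3 t
    have hg : HasDerivAt (fun t : ℝ => (Real.cot θ ^ 2 + 1) * (t ^ 2 + C))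
        ((Real.cot θ ^ 2 + 1) * (2 * t)) t := (ht2.add_const C).const_mul _
    have hr : HasDerivAt (fun y : ℝ => y ^ ((3 : ℝ) / 2))
        ((3 : ℝ) / 2 * ((Real.cot θ ^ 2 + 1) * (t ^ 2 + C)) ^ ((3 : ℝ) / 2 - 1))
        ((Real.cot θ ^ 2 + 1) * (t ^ 2 + C)) :=
      Real.hasDerivAt_rpow_const (Or.inr (by norm_num))
    have h := ((((ht2.const_mul sS).add (ht3.const_mul
        (alpha * Real.cos θ / (3 * Real.sin θ ^ 2) - (shat - alpha * rhat) / 6))).sub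
        ((hr.comp t hg).const_mul (alpha / 3 * Real.sin θ))).add_const d0).add
        ((hasDerivAt_id t).const_mul d1)
    convert h using 1
    · rfl
    · rfl
    · rfl
    ring
  have htpm : ((1 + x) / x) - ((1 - x) / x) = 2 := by
    field_simp
    ring
  constructor
  · refine ⟨⟨-vm - ((vm - vp) / 2) * ((1 - x) / x), (vm - vp) / 2⟩, ⟨?_, ?_⟩, ?_⟩
    · rw [(hval _ _).1]; ring
    · rw [(hval _ _).2]
      linear_combination ((vm - vp) / 2) * htpm
    · rintro ⟨q0, q1⟩ ⟨e1, e2⟩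
      rw [(hval q0 q1).1] at e1
      rw [(hval q0 q1).2] at e2
      have hq1 : q1 = (vm - vp) / 2 := by
        linear_combination (e2 - e1) / 2 - (q1 / 2) * htpm
      have hq0 : q0 = -vm - ((vm - vp) / 2) * ((1 - x) / x) := by
        linear_combination e1 - ((1 - x) / x) * hq1
      simp only [Prod.mk.injEq]
      exact ⟨hq0, hq1⟩
  · intro d0 d1 hm hp'
    rw [(hval d0 d1).1] at hm
    rw [(hval d0 d1).2] at hp'
    have hd1 : d1 = (vm - vp) / 2 := by
      linear_combination (hp' - hm) / 2 - (d1 / 2) * htpm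
    constructor
    · rw [(hder d0 d1 tp).deriv, hgp, hhalf _ hwp0, hAc, hSp, htp, hd1, hvm, hvp]
      field_simp
      ring
    · rw [(hder d0 d1 tm).deriv, hgm, hhalf _ hwm0, hAc, hSm, htm, hd1, hvm, hvp,
        hbetaInf]
      field_simp
      ring
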